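/- Let X be a nonempty Hausdorff topological space and let F : X → ℝ^m be a continuous proper map that is a local homeomorphism (every point of X has an open neighborhood mapped homeomorphically by F onto an open subset of ℝ^m). Then F is a surjective covering map; moreover, if in addition X is connected, then F is a homeomorphism of X onto ℝ^m. -/

import Mathlib

open Function Set Metric Topology

set_option linter.unusedSectionVars false

section Aux

universe u

variable {m : ℕ} {X : Type u} [TopologicalSpace X] [T2Space X]

/-- Bespoke "evenly covered" data for `F` over an open set `V`. -/
structure MyTriv (F : X → EuclideanSpace ℝ (Fin m)) (V : Set (EuclideanSpace ℝ (Fin m))) where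
  hV : IsOpen V
  ι : Type u
  W : ι → Set X
  hW : ∀ i, IsOpen (W i)
  hdisj : ∀ i j, i ≠ j → Disjoint (W i) (W j)
  hcover : F ⁻¹' V = ⋃ i, W i
  g : ι → EuclideanSpace ℝ (Fin m) → X
  hgcont : ∀ i, ContinuousOn (g i) V
  hgF : ∀ i, ∀ y ∈ V, F (g i y) = y
  hgW : ∀ i, ∀ y ∈ V, g i y ∈ W i
  hWg : ∀ i, ∀ x ∈ W i, g i (F x) = x

variable {F : X → EuclideanSpace ℝ (Fin m)}

theorem MyTriv.W_subset {V} (T : MyTriv F V) (i : T.ι) : T.W i ⊆ F ⁻¹' V := by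
  rw [T.hcover]; exact subset_iUnion _ i

theorem MyTriv.exists_mem {V} (T : MyTriv F V) {x : X} (hx : F x ∈ V) : ∃ i, x ∈ T.W i := by
  have : x ∈ F ⁻¹' V := hx
  rw [T.hcover] at this; exact mem_iUnion.mp this

theorem MyTriv.index_unique {V} (T : MyTriv F V) {x : X} {i j : T.ι}
    (hi : x ∈ T.W i) (hj : x ∈ T.W j) : i = j := by
  by_contra h
  exact Set.disjoint_left.mp (T.hdisj i j h) hi hj

/-- Restriction of a `MyTriv` to a smaller open set. -/
def MyTriv.restrict {V} (T : MyTriv F V) (hFcont : Continuous F)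
    {V' : Set (EuclideanSpace ℝ (Fin m))}
    (hV' : IsOpen V') (hsub : V' ⊆ V) : MyTriv F V' where
  hV := hV'
  ι := T.ι
  W := fun i => T.W i ∩ F ⁻¹' V'
  hW := fun i => (T.hW i).inter (hV'.preimage hFcont)
  hdisj := fun i j h => ((T.hdisj i j h).mono inter_subset_left inter_subset_left)
  hcover := by
    ext x
    simp only [mem_preimage, mem_iUnion, mem_inter_iff]
    constructor
    · intro hx
      obtain ⟨i, hi⟩ := T.exists_mem (hsub hx)
      exact ⟨i, hi, hx⟩
    · rintro ⟨i, -, hx⟩; exact hx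
  g := T.g
  hgcont := fun i => (T.hgcont i).mono hsub
  hgF := fun i y hy => T.hgF i y (hsub hy)
  hgW := fun i y hy => ⟨T.hgW i y (hsub hy), by rw [mem_preimage, T.hgF i y (hsub hy)]; exact hy⟩
  hWg := fun i x hx => T.hWg i x hx.1

end Aux
section Aux2

set_option linter.unusedSectionVars false

variable {m : ℕ} {X : Type*} [TopologicalSpace X] [T2Space X]
  {F : X → EuclideanSpace ℝ (Fin m)}

theorem fiber_discrete (hFloc : IsLocalHomeomorph F) (y : EuclideanSpace ℝ (Fin m)) :
    DiscreteTopology ↥(F ⁻¹' {y}) := by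
  rw [discreteTopology_iff_isOpen_singleton]
  rintro ⟨x, hx⟩
  obtain ⟨e, hxe, hfe⟩ := hFloc x
  have key : ({⟨x, hx⟩} : Set ↥(F ⁻¹' {y})) = Subtype.val ⁻¹' e.source := by
    ext ⟨x', hx'⟩
    simp only [mem_singleton_iff, Subtype.mk.injEq, mem_preimage]
    constructor
    · rintro rfl; exact hxe
    · intro h
      apply e.injOn h hxe
      have h1 : e x' = F x' := by rw [hfe]
      have h2 : e x = F x := by rw [hfe]
      rw [h1, h2, mem_preimage, mem_singleton_iff] at *
      rw [hx, hx']
  rw [key]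
  exact e.open_source.preimage continuous_subtype_val

theorem exists_mytriv (hFcont : Continuous F)
    (hFproper : ∀ K : Set (EuclideanSpace ℝ (Fin m)), IsCompact K → IsCompact (F ⁻¹' K))
    (hFloc : IsLocalHomeomorph F) (y : EuclideanSpace ℝ (Fin m)) :
    ∃ V, y ∈ V ∧ Nonempty (MyTriv F V) := by
  classical
  choose e hmem hfe using hFloc
  -- the fiber is finite
  have hfib_cpt : IsCompact (F ⁻¹' {y}) := hFproper _ isCompact_singleton
  have hfin : (F ⁻¹' {y}).Finite := hfib_cpt.finite (isDiscrete_iff_discreteTopology.mpr (fiber_discrete (fun x => ⟨e x, hmem x, hfe x⟩) y))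
  set S : Finset X := hfin.toFinset with hS
  have hSmem : ∀ {a : X}, a ∈ S ↔ F a = y := by
    intro a; rw [hS, Set.Finite.mem_toFinset, mem_preimage, mem_singleton_iff]
  -- pairwise disjoint neighborhoods
  have sep : ∀ a b : X, ∃ u v : Set X,
      a ≠ b → IsOpen u ∧ IsOpen v ∧ a ∈ u ∧ b ∈ v ∧ Disjoint u v := by
    intro a b
    by_cases h : a ≠ b
    · obtain ⟨u, v, h1, h2, h3, h4, h5⟩ := t2_separation h
      exact ⟨u, v, fun _ => ⟨h1, h2, h3, h4, h5⟩⟩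
    · exact ⟨∅, ∅, fun h' => absurd h' h⟩
  choose u v hsep using sep
  set U : X → Set X := fun a => (e a).source ∩ ⋂ b ∈ S.erase a, (u a b ∩ v b a) with hU
  have hUopen : ∀ a, IsOpen (U a) := by
    intro a
    refine (e a).open_source.inter (isOpen_biInter_finset fun b hb => ?_)
    have hab : a ≠ b := (Finset.ne_of_mem_erase hb).symm
    exact ((hsep a b hab).1).inter ((hsep b a hab.symm).2.1)
  have hUmem : ∀ a, a ∈ U a := by
    intro a
    refine ⟨hmem a, mem_iInter₂.mpr fun b hb => ?_⟩
    have hab : a ≠ b := (Finset.ne_of_mem_erase hb).symm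
    exact ⟨(hsep a b hab).2.2.1, (hsep b a hab.symm).2.2.2.1⟩
  have hUdisj : ∀ a ∈ S, ∀ b ∈ S, a ≠ b → Disjoint (U a) (U b) := by
    intro a ha b hb hab
    have h1 : U a ⊆ u a b := fun x hx => (mem_iInter₂.mp hx.2 b (Finset.mem_erase.mpr ⟨hab.symm, hb⟩)).1
    have h2 : U b ⊆ v a b := fun x hx => (mem_iInter₂.mp hx.2 a (Finset.mem_erase.mpr ⟨hab, ha⟩)).2
    exact ((hsep a b hab).2.2.2.2).mono h1 h2
  set Ucup : Set X := ⋃ a ∈ S, U a with hUcup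
  have hUcupopen : IsOpen Ucup := isOpen_biUnion fun a _ => hUopen a
  -- properness: a neighborhood V₁ of y with F ⁻¹' V₁ ⊆ Ucup
  have hKc : IsCompact (F ⁻¹' closedBall y 1) := hFproper _ (isCompact_closedBall y 1)
  have hCc : IsCompact (F ⁻¹' closedBall y 1 \ Ucup) := hKc.diff hUcupopen
  have hFC : IsClosed (F '' (F ⁻¹' closedBall y 1 \ Ucup)) := (hCc.image hFcont).isClosed
  have hynotin : y ∉ F '' (F ⁻¹' closedBall y 1 \ Ucup) := by
    rintro ⟨c, ⟨-, hc2⟩, hcy⟩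
    exact hc2 (mem_biUnion (hSmem.mpr hcy) (hUmem c))
  set V₁ : Set (EuclideanSpace ℝ (Fin m)) :=
    ball y 1 \ F '' (F ⁻¹' closedBall y 1 \ Ucup) with hV₁
  have hV₁open : IsOpen V₁ := isOpen_ball.sdiff hFC
  have hyV₁ : y ∈ V₁ := ⟨mem_ball_self one_pos, hynotin⟩
  have hV₁sub : F ⁻¹' V₁ ⊆ Ucup := by
    intro x hx
    by_contra hxU
    exact hx.2 ⟨x, ⟨ball_subset_closedBall hx.1, hxU⟩, rfl⟩
  -- now intersect with the images of the U a's
  have himg : ∀ a ∈ S, IsOpen (F '' U a) ∧ y ∈ F '' U a := by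
    intro a ha
    constructor
    · have : F '' U a = e a '' U a := by rw [hfe a]
      rw [this]
      exact (e a).isOpen_image_of_subset_source (hUopen a) inter_subset_left
    · exact ⟨a, hUmem a, hSmem.mp ha⟩
  set V : Set (EuclideanSpace ℝ (Fin m)) := V₁ ∩ ⋂ a ∈ S, F '' U a with hV
  have hVopen : IsOpen V := hV₁open.inter (isOpen_biInter_finset fun a ha => (himg a ha).1)
  have hyV : y ∈ V := ⟨hyV₁, mem_iInter₂.mpr fun a ha => (himg a ha).2⟩
  have hVsub : ∀ a ∈ S, V ⊆ F '' U a := fun a ha y' hy' => mem_iInter₂.mp hy'.2 a ha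
  -- target and symm facts
  have hUsub : ∀ a, U a ⊆ (e a).source := fun a => inter_subset_left
  have hVtarget : ∀ a ∈ S, V ⊆ (e a).target := by
    intro a ha y' hy'
    obtain ⟨x', hx', hxy⟩ := hVsub a ha hy'
    rw [← hxy, hfe a]
    exact (e a).map_source (hUsub a hx')
  have hsymmU : ∀ a ∈ S, ∀ y' ∈ V, (e a).symm y' ∈ U a ∧ F ((e a).symm y') = y' := by
    intro a ha y' hy'
    obtain ⟨x', hx', hxy⟩ := hVsub a ha hy'
    have hx'source : x' ∈ (e a).source := hUsub a hx'
    have hsymm_eq : (e a).symm y' = x' := by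
      rw [← hxy, hfe a]
      exact (e a).left_inv hx'source
    exact ⟨hsymm_eq ▸ hx', hsymm_eq ▸ hxy⟩
  refine ⟨V, hyV, ⟨?_⟩⟩
  exact
  { hV := hVopen
    ι := ↥(F ⁻¹' {y})
    W := fun i => U i.1 ∩ F ⁻¹' V
    hW := fun i => (hUopen i.1).inter (hVopen.preimage hFcont)
    hdisj := by
      rintro ⟨a, ha⟩ ⟨b, hb⟩ hab
      have : a ≠ b := fun h => hab (Subtype.ext h)
      exact (hUdisj a (hSmem.mpr ha) b (hSmem.mpr hb) this).mono inter_subset_left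
        inter_subset_left
    hcover := by
      apply Subset.antisymm
      · intro x hx
        have hx1 : x ∈ Ucup := hV₁sub (show F x ∈ V₁ from hx.1)
        obtain ⟨a, haS, hxa⟩ := mem_iUnion₂.mp hx1
        exact mem_iUnion.mpr
          ⟨⟨a, by rw [mem_preimage, mem_singleton_iff]; exact hSmem.mp haS⟩, hxa, hx⟩
      · intro x hx
        obtain ⟨i, hi⟩ := mem_iUnion.mp hx
        exact hi.2
    g := fun i y' => (e i.1).symm y'
    hgcont := fun i => (e i.1).continuousOn_symm.mono (hVtarget i.1 (hSmem.mpr i.2))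
    hgF := fun i y' hy' => (hsymmU i.1 (hSmem.mpr i.2) y' hy').2
    hgW := fun i y' hy' => ⟨(hsymmU i.1 (hSmem.mpr i.2) y' hy').1, by
      rw [mem_preimage, (hsymmU i.1 (hSmem.mpr i.2) y' hy').2]; exact hy'⟩
    hWg := fun i x hx => by
      have hxsrc : x ∈ (e i.1).source := hUsub i.1 hx.1
      have hfx : F x = e i.1 x := congrFun (hfe i.1) x
      rw [hfx]
      exact (e i.1).left_inv hxsrc }

end Aux2
section Aux3

set_option linter.unusedSectionVars false

universe v

variable {m : ℕ} {X : Type u} [TopologicalSpace X] [T2Space X]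
  {F : X → EuclideanSpace ℝ (Fin m)}

/-- Uniqueness of lifts through `F`, given local trivializations everywhere. -/
theorem lift_unique (htriv : ∀ y : EuclideanSpace ℝ (Fin m), ∃ V, y ∈ V ∧ Nonempty (MyTriv F V))
    {A : Type v} [TopologicalSpace A] {U : Set A} (hU : IsPreconnected U)
    {g₁ g₂ : A → X} (h₁ : ContinuousOn g₁ U) (h₂ : ContinuousOn g₂ U)
    (he : ∀ a ∈ U, F (g₁ a) = F (g₂ a)) {a₀ : A} (ha₀ : a₀ ∈ U)
    (h0 : g₁ a₀ = g₂ a₀) : Set.EqOn g₁ g₂ U := by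
  haveI := Subtype.preconnectedSpace hU
  set G₁ : U → X := U.restrict g₁ with hG₁def
  set G₂ : U → X := U.restrict g₂ with hG₂def
  have hG₁ : Continuous G₁ := continuousOn_iff_continuous_restrict.mp h₁
  have hG₂ : Continuous G₂ := continuousOn_iff_continuous_restrict.mp h₂
  have hclopen : IsClopen {p : U | G₁ p = G₂ p} := by
    constructor
    · exact isClosed_eq hG₁ hG₂
    · rw [isOpen_iff_forall_mem_open]
      intro p hp
      obtain ⟨V, hyV, ⟨T⟩⟩ := htriv (F (G₁ p))
      obtain ⟨i, hi⟩ := T.exists_mem hyV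
      have hi2 : G₂ p ∈ T.W i := by rwa [← hp]
      refine ⟨G₁ ⁻¹' T.W i ∩ G₂ ⁻¹' T.W i, ?_, ?_, hi, hi2⟩
      · rintro q ⟨hq₁, hq₂⟩
        have e₁ : T.g i (F (G₁ q)) = G₁ q := T.hWg i _ hq₁
        have e₂ : T.g i (F (G₂ q)) = G₂ q := T.hWg i _ hq₂
        have : F (G₁ q) = F (G₂ q) := he q.1 q.2
        show G₁ q = G₂ q
        rw [← e₁, ← e₂, this]
      · exact ((T.hW i).preimage hG₁).inter ((T.hW i).preimage hG₂)
  have huniv := hclopen.eq_univ ⟨⟨a₀, ha₀⟩, h0⟩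
  intro a ha
  have : (⟨a, ha⟩ : U) ∈ {p : U | G₁ p = G₂ p} := by rw [huniv]; trivial
  exact this

/-- A continuous section of `F` over `U` through `x₀`. -/
def HasSec (F : X → EuclideanSpace ℝ (Fin m)) (x₀ : X)
    (U : Set (EuclideanSpace ℝ (Fin m))) : Prop :=
  ∃ s : EuclideanSpace ℝ (Fin m) → X,
    ContinuousOn s U ∧ (∀ y ∈ U, F (s y) = y) ∧ s (F x₀) = x₀

theorem HasSec.mono {x₀ : X} {U U' : Set (EuclideanSpace ℝ (Fin m))}
    (h : HasSec F x₀ U) (hUU : U' ⊆ U) : HasSec F x₀ U' := by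
  obtain ⟨s, h1, h2, h3⟩ := h
  exact ⟨s, h1.mono hUU, fun y hy => h2 y (hUU hy), h3⟩

/-- Two sections through `x₀` agree on the smaller ball. -/
theorem sec_agree (htriv : ∀ y : EuclideanSpace ℝ (Fin m), ∃ V, y ∈ V ∧ Nonempty (MyTriv F V))
    {x₀ : X} {r₁ r₂ : ℝ} {s₁ s₂ : EuclideanSpace ℝ (Fin m) → X}
    (H₁ : ContinuousOn s₁ (ball (F x₀) r₁)) (h₁F : ∀ y ∈ ball (F x₀) r₁, F (s₁ y) = y)
    (h₁0 : s₁ (F x₀) = x₀)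
    (H₂ : ContinuousOn s₂ (ball (F x₀) r₂)) (h₂F : ∀ y ∈ ball (F x₀) r₂, F (s₂ y) = y)
    (h₂0 : s₂ (F x₀) = x₀) :
    Set.EqOn s₁ s₂ (ball (F x₀) (min r₁ r₂)) := by
  rcases le_or_gt (min r₁ r₂) 0 with h | h
  · rw [ball_eq_empty.mpr h]; exact fun y hy => absurd hy (notMem_empty y)
  · have hb : ball (F x₀) (min r₁ r₂) ⊆ ball (F x₀) r₁ := ball_subset_ball (min_le_left _ _)
    have hb' : ball (F x₀) (min r₁ r₂) ⊆ ball (F x₀) r₂ := ball_subset_ball (min_le_right _ _)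
    refine lift_unique htriv ((convex_ball _ _).isPreconnected) (H₁.mono hb) (H₂.mono hb')
      (fun y hy => by rw [h₁F y (hb hy), h₂F y (hb' hy)]) (mem_ball_self h) ?_
    rw [h₁0, h₂0]

/-- Gluing sections over an increasing family of balls. -/
theorem hasSec_glue (htriv : ∀ y : EuclideanSpace ℝ (Fin m), ∃ V, y ∈ V ∧ Nonempty (MyTriv F V))
    {x₀ : X} {U : Set (EuclideanSpace ℝ (Fin m))} (c : EuclideanSpace ℝ (Fin m) → ℝ)
    (hU0 : F x₀ ∈ U)
    (hc : ∀ y ∈ U, dist y (F x₀) < c y)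
    (hball : ∀ y ∈ U, ball (F x₀) (c y) ⊆ U)
    (hsec : ∀ y ∈ U, HasSec F x₀ (ball (F x₀) (c y))) :
    HasSec F x₀ U := by
  classical
  set y₀ := F x₀ with hy₀
  -- choose sections
  have hsec' : ∀ y : EuclideanSpace ℝ (Fin m), ∃ s, y ∈ U →
      ContinuousOn s (ball y₀ (c y)) ∧ (∀ y' ∈ ball y₀ (c y), F (s y') = y') ∧ s y₀ = x₀ := by
    intro y
    by_cases hy : y ∈ U
    · obtain ⟨s, h1, h2, h3⟩ := hsec y hy
      exact ⟨s, fun _ => ⟨h1, h2, h3⟩⟩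
    · exact ⟨fun _ => x₀, fun h => absurd h hy⟩
  choose σ hσ using hsec'
  set s : EuclideanSpace ℝ (Fin m) → X := fun y => σ y y with hsdef
  have hagree : ∀ y ∈ U, ∀ y' ∈ U, Set.EqOn (σ y) (σ y') (ball y₀ (min (c y) (c y'))) := by
    intro y hy y' hy'
    exact sec_agree htriv (hσ y hy).1 (hσ y hy).2.1 (hσ y hy).2.2
      (hσ y' hy').1 (hσ y' hy').2.1 (hσ y' hy').2.2
  -- s agrees with σ y on ball y₀ (c y)
  have hkey : ∀ y ∈ U, Set.EqOn s (σ y) (ball y₀ (c y)) := by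
    intro y hy y'' hy''
    have hy''U : y'' ∈ U := hball y hy hy''
    have h1 : y'' ∈ ball y₀ (min (c y'') (c y)) := by
      rw [mem_ball]
      exact lt_min (hc y'' hy''U) (mem_ball.mp hy'')
    exact hagree y'' hy''U y hy h1
  refine ⟨s, ?_, ?_, ?_⟩
  · intro y hy
    have hmem : y ∈ ball y₀ (c y) := mem_ball.mpr (hc y hy)
    have h1 : ContinuousWithinAt (σ y) (U ∩ ball y₀ (c y)) y :=
      ((hσ y hy).1.mono inter_subset_right) y ⟨hy, hmem⟩
    have h2 : ContinuousWithinAt s (U ∩ ball y₀ (c y)) y := by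
      refine h1.congr (fun y'' hy'' => hkey y hy hy''.2) (hkey y hy hmem)
    exact (continuousWithinAt_inter (isOpen_ball.mem_nhds hmem)).mp h2
  · intro y hy
    have hmem : y ∈ ball y₀ (c y) := mem_ball.mpr (hc y hy)
    exact (hσ y hy).2.1 y hmem
  · show σ y₀ y₀ = x₀
    exact (hσ y₀ hU0).2.2
end Aux3
section Geom

open scoped RealInnerProductSpace

variable {m : ℕ}

theorem geom_two {y₀ c₁ c₂ z : EuclideanSpace ℝ (Fin m)} {R r₁ r₂ : ℝ}
    (hR : 0 < R) (hc₁ : dist c₁ y₀ = R) (hc₂ : dist c₂ y₀ = R)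
    (hz₁ : dist z c₁ < r₁) (hz₂ : dist z c₂ < r₂) :
    ∃ w, dist w c₁ < r₁ ∧ dist w c₂ < r₂ ∧ dist w y₀ < R := by
  rcases lt_or_ge (dist z y₀) R with h | h
  · exact ⟨z, hz₁, hz₂, h⟩
  set u := z - y₀ with hu_def
  have hnu : R ≤ ‖u‖ := by rwa [dist_eq_norm] at h
  have hnu0 : 0 < ‖u‖ := lt_of_lt_of_le hR hnu
  set L := R / ‖u‖ with hL_def
  have hL0 : 0 < L := div_pos hR hnu0
  have hL1 : L ≤ 1 := (div_le_one hnu0).mpr hnu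
  have hLn : L * ‖u‖ = R := div_mul_cancel₀ R hnu0.ne'
  set w₀ := y₀ + L • u with hw₀_def
  have key : ∀ c : EuclideanSpace ℝ (Fin m), dist c y₀ = R → dist w₀ c ≤ dist z c := by
    intro c hc
    set a := c - y₀ with ha_def
    have ha : ‖a‖ = R := by rw [ha_def, ← dist_eq_norm]; exact hc
    have hwc : w₀ - c = L • u - a := by rw [hw₀_def, ha_def]; abel
    have hzc : z - c = u - a := by rw [hu_def, ha_def]; abel
    rw [dist_eq_norm, dist_eq_norm, hwc, hzc]
    have hip : ⟪u, a⟫ ≤ ‖u‖ * R := by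
      calc ⟪u, a⟫ ≤ ‖u‖ * ‖a‖ := real_inner_le_norm u a
      _ = ‖u‖ * R := by rw [ha]
    have hsq : ‖L • u - a‖ ^ 2 ≤ ‖u - a‖ ^ 2 := by
      rw [norm_sub_sq_real (L • u) a, norm_sub_sq_real u a, norm_smul, real_inner_smul_left,
        Real.norm_eq_abs, abs_of_pos hL0]
      nlinarith [mul_le_mul_of_nonneg_left hip (sub_nonneg.mpr hL1),
        mul_nonneg (mul_nonneg (sub_nonneg.mpr hL1) (norm_nonneg u)) (sub_nonneg.mpr hnu), hLn]
    have hs := Real.sqrt_le_sqrt hsq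
    rwa [Real.sqrt_sq (norm_nonneg _), Real.sqrt_sq (norm_nonneg _)] at hs
  have hd₁ : dist w₀ c₁ < r₁ := lt_of_le_of_lt (key c₁ hc₁) hz₁
  have hd₂ : dist w₀ c₂ < r₂ := lt_of_le_of_lt (key c₂ hc₂) hz₂
  have hw₀y : dist w₀ y₀ = R := by
    have h1 : w₀ - y₀ = L • u := by rw [hw₀_def]; abel
    rw [dist_eq_norm, h1, norm_smul, Real.norm_eq_abs, abs_of_pos hL0, hLn]
  set A := (r₁ - dist w₀ c₁) / R with hA_def
  set B := (r₂ - dist w₀ c₂) / R with hB_def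
  have hA0 : 0 < A := div_pos (by linarith) hR
  have hB0 : 0 < B := div_pos (by linarith) hR
  set δ := min 1 (min A B) / 2 with hδ_def
  have hmin0 : 0 < min 1 (min A B) := lt_min one_pos (lt_min hA0 hB0)
  have hδ0 : 0 < δ := by rw [hδ_def]; linarith
  have hδ1 : δ < 1 := by
    have h1 : min 1 (min A B) ≤ 1 := min_le_left _ _
    rw [hδ_def]; linarith
  have hδA : δ < A := by
    have h1 : min 1 (min A B) ≤ A := le_trans (min_le_right _ _) (min_le_left _ _)
    rw [hδ_def]; linarith
  have hδB : δ < B := by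
    have h1 : min 1 (min A B) ≤ B := le_trans (min_le_right _ _) (min_le_right _ _)
    rw [hδ_def]; linarith
  have hδRA : δ * R < r₁ - dist w₀ c₁ := by
    have := mul_lt_mul_of_pos_right hδA hR
    rwa [hA_def, div_mul_cancel₀ _ hR.ne'] at this
  have hδRB : δ * R < r₂ - dist w₀ c₂ := by
    have := mul_lt_mul_of_pos_right hδB hR
    rwa [hB_def, div_mul_cancel₀ _ hR.ne'] at this
  set w := y₀ + ((1 - δ) * L) • u with hw_def
  have hwy : dist w y₀ = (1 - δ) * R := by
    have h1 : w - y₀ = ((1 - δ) * L) • u := by rw [hw_def]; abel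
    rw [dist_eq_norm, h1, norm_smul, Real.norm_eq_abs,
      abs_of_pos (mul_pos (by linarith) hL0), mul_assoc, hLn]
  have hww₀ : dist w w₀ = δ * R := by
    have h1 : w - w₀ = ((1 - δ) * L - L) • u := by rw [hw_def, hw₀_def, sub_smul]; abel
    have h2 : (1 - δ) * L - L = -(δ * L) := by ring
    rw [dist_eq_norm, h1, h2, neg_smul, norm_neg, norm_smul, Real.norm_eq_abs,
      abs_of_pos (mul_pos hδ0 hL0), mul_assoc, hLn]
  refine ⟨w, ?_, ?_, ?_⟩
  · calc dist w c₁ ≤ dist w w₀ + dist w₀ c₁ := dist_triangle w w₀ c₁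
    _ = δ * R + dist w₀ c₁ := by rw [hww₀]
    _ < r₁ := by linarith
  · calc dist w c₂ ≤ dist w w₀ + dist w₀ c₂ := dist_triangle w w₀ c₂
    _ = δ * R + dist w₀ c₂ := by rw [hww₀]
    _ < r₂ := by linarith
  · rw [hwy]; nlinarith

theorem geom_one {y₀ c : EuclideanSpace ℝ (Fin m)} {R r : ℝ}
    (hR : 0 < R) (hc : dist c y₀ = R) (hr : 0 < r) :
    ∃ w, dist w c < r ∧ dist w y₀ < R := by
  obtain ⟨w, h1, -, h3⟩ := geom_two hR hc hc (by rwa [dist_self]) (by rwa [dist_self])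
  exact ⟨w, h1, h3⟩

end Geom
section Aux5

set_option linter.unusedSectionVars false

variable {m : ℕ} {X : Type u} [TopologicalSpace X] [T2Space X]
  {F : X → EuclideanSpace ℝ (Fin m)}

private theorem contWithinAt_of_eqOn_open {f g : EuclideanSpace ℝ (Fin m) → X}
    {O Ω : Set (EuclideanSpace ℝ (Fin m))} (hO : IsOpen O) {y : EuclideanSpace ℝ (Fin m)}
    (hy : y ∈ O) (heq : Set.EqOn f g O) (hg : ContinuousOn g O) :
    ContinuousWithinAt f Ω y := by
  have hca : ContinuousAt g y := hg.continuousAt (hO.mem_nhds hy)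
  have hev : f =ᶠ[nhds y] g := Filter.eventually_of_mem (hO.mem_nhds hy) heq
  exact ((continuousAt_congr hev).mpr hca).continuousWithinAt

theorem extend_section (hFcont : Continuous F)
    (htriv : ∀ y : EuclideanSpace ℝ (Fin m), ∃ V, y ∈ V ∧ Nonempty (MyTriv F V))
    {x₀ : X} {R : ℝ} (hR : 0 < R) (h : HasSec F x₀ (ball (F x₀) R)) :
    ∃ ε > 0, HasSec F x₀ (ball (F x₀) (R + ε)) := by
  classical
  obtain ⟨s, hscont, hsF, hs0⟩ := h
  set y₀ := F x₀ with hy₀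
  have hVz : ∀ z : EuclideanSpace ℝ (Fin m), ∃ r > 0, Nonempty (MyTriv F (ball z r)) := by
    intro z
    obtain ⟨V, hzV, ⟨T₀⟩⟩ := htriv z
    obtain ⟨r, hr0, hrsub⟩ := Metric.isOpen_iff.mp T₀.hV z hzV
    exact ⟨r, hr0, ⟨T₀.restrict hFcont isOpen_ball hrsub⟩⟩
  choose r hr0 hT using hVz
  set T : ∀ z, MyTriv F (ball z (r z)) := fun z => (hT z).some with hTdef
  have hcover : sphere y₀ R ⊆ ⋃ z ∈ sphere y₀ R, ball z (r z) := fun z hz =>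
    mem_biUnion hz (mem_ball_self (hr0 z))
  obtain ⟨t, htsub, htfin, htcover⟩ := (isCompact_sphere y₀ R).elim_finite_subcover_image
    (fun z _ => isOpen_ball) hcover
  have htR : ∀ z ∈ t, dist z y₀ = R := fun z hz => mem_sphere.mp (htsub hz)
  -- a point of each patch inside the ball
  have hp : ∀ z ∈ t, ∃ p, p ∈ ball z (r z) ∧ p ∈ ball y₀ R := by
    intro z hz
    obtain ⟨w, h1, h2⟩ := geom_one hR (htR z hz) (hr0 z)
    exact ⟨w, mem_ball.mpr h1, mem_ball.mpr h2⟩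
  -- the sheet of each patch through s
  have hj : ∀ z ∈ t, ∀ p ∈ ball z (r z) ∩ ball y₀ R, ∃ i, s p ∈ (T z).W i := by
    intro z hz p hp'
    refine (T z).exists_mem ?_
    rw [hsF p hp'.2]
    exact hp'.1
  -- the local extensions
  have hσ : ∀ z ∈ t, ∃ σ : EuclideanSpace ℝ (Fin m) → X,
      ContinuousOn σ (ball z (r z)) ∧ (∀ y' ∈ ball z (r z), F (σ y') = y') ∧
      Set.EqOn σ s (ball z (r z) ∩ ball y₀ R) := by
    intro z hz
    obtain ⟨p, hp1, hp2⟩ := hp z hz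
    obtain ⟨i, hi⟩ := hj z hz p ⟨hp1, hp2⟩
    refine ⟨(T z).g i, (T z).hgcont i, (T z).hgF i, ?_⟩
    have hbase : (T z).g i p = s p := by
      have := (T z).hWg i _ hi
      rwa [hsF p hp2] at this
    refine lift_unique htriv ((convex_ball z (r z)).inter (convex_ball y₀ R)).isPreconnected
      (((T z).hgcont i).mono inter_subset_left) (hscont.mono inter_subset_right)
      (fun y' hy' => by rw [(T z).hgF i y' hy'.1, hsF y' hy'.2]) ⟨hp1, hp2⟩ hbase
  have hσ' : ∀ z : EuclideanSpace ℝ (Fin m), ∃ σ, z ∈ t →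
      ContinuousOn σ (ball z (r z)) ∧ (∀ y' ∈ ball z (r z), F (σ y') = y') ∧
      Set.EqOn σ s (ball z (r z) ∩ ball y₀ R) := by
    intro z
    by_cases hz : z ∈ t
    · obtain ⟨σ, h1⟩ := hσ z hz; exact ⟨σ, fun _ => h1⟩
    · exact ⟨fun _ => x₀, fun h => absurd h hz⟩
  choose σ hσspec using hσ'
  -- pairwise compatibility
  have hpair : ∀ z₁ ∈ t, ∀ z₂ ∈ t,
      Set.EqOn (σ z₁) (σ z₂) (ball z₁ (r z₁) ∩ ball z₂ (r z₂)) := by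
    intro z₁ hz₁ z₂ hz₂ y' hy'
    obtain ⟨w, hw1, hw2, hw3⟩ := geom_two hR (htR z₁ hz₁) (htR z₂ hz₂)
      (mem_ball.mp hy'.1) (mem_ball.mp hy'.2)
    have hww : (σ z₁) w = (σ z₂) w := by
      rw [(hσspec z₁ hz₁).2.2 ⟨mem_ball.mpr hw1, mem_ball.mpr hw3⟩,
        (hσspec z₂ hz₂).2.2 ⟨mem_ball.mpr hw2, mem_ball.mpr hw3⟩]
    exact lift_unique htriv ((convex_ball z₁ (r z₁)).inter (convex_ball z₂ (r z₂))).isPreconnected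
      ((hσspec z₁ hz₁).1.mono inter_subset_left) ((hσspec z₂ hz₂).1.mono inter_subset_right)
      (fun y'' hy'' => by
        rw [(hσspec z₁ hz₁).2.1 y'' hy''.1, (hσspec z₂ hz₂).2.1 y'' hy''.2])
      ⟨mem_ball.mpr hw1, mem_ball.mpr hw2⟩ hww hy'
  -- the glued extension
  set Sext : EuclideanSpace ℝ (Fin m) → X := fun y' =>
    if y' ∈ ball y₀ R then s y'
    else if h2 : ∃ z ∈ t, y' ∈ ball z (r z) then σ h2.choose y' else x₀ with hSext_def
  have hext_eq1 : Set.EqOn Sext s (ball y₀ R) := fun y' hy' => by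
    simp only [hSext_def, if_pos hy']
  have hext_eqz : ∀ z ∈ t, Set.EqOn Sext (σ z) (ball z (r z)) := by
    intro z hz y'' hy''
    by_cases hb : y'' ∈ ball y₀ R
    · rw [hext_eq1 hb, ← (hσspec z hz).2.2 ⟨hy'', hb⟩]
    · have h2 : ∃ z' ∈ t, y'' ∈ ball z' (r z') := ⟨z, hz, hy''⟩
      have : Sext y'' = σ h2.choose y'' := by
        simp only [hSext_def, if_neg hb, dif_pos h2]
      rw [this]
      exact hpair h2.choose h2.choose_spec.1 z hz ⟨h2.choose_spec.2, hy''⟩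
  set Ω : Set (EuclideanSpace ℝ (Fin m)) := ball y₀ R ∪ ⋃ z ∈ t, ball z (r z) with hΩ_def
  have hΩopen : IsOpen Ω := isOpen_ball.union (isOpen_biUnion fun z _ => isOpen_ball)
  have hΩcont : ContinuousOn Sext Ω := by
    intro y' hy'
    rcases hy' with hy' | hy'
    · exact contWithinAt_of_eqOn_open isOpen_ball hy' hext_eq1 hscont
    · obtain ⟨z, hz, hyz⟩ := mem_iUnion₂.mp hy'
      exact contWithinAt_of_eqOn_open isOpen_ball hyz (hext_eqz z hz) (hσspec z hz).1
  have hΩF : ∀ y' ∈ Ω, F (Sext y') = y' := by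
    intro y' hy'
    rcases hy' with hy' | hy'
    · rw [hext_eq1 hy']; exact hsF y' hy'
    · obtain ⟨z, hz, hyz⟩ := mem_iUnion₂.mp hy'
      rw [hext_eqz z hz hyz]
      exact (hσspec z hz).2.1 y' hyz
  have hΩ0 : Sext y₀ = x₀ := by
    rw [hext_eq1 (mem_ball_self hR)]; exact hs0
  have hclosed_sub : closedBall y₀ R ⊆ Ω := by
    intro y' hy'
    rcases lt_or_eq_of_le (mem_closedBall.mp hy') with h' | h'
    · exact Or.inl (mem_ball.mpr h')
    · exact Or.inr (htcover (mem_sphere.mpr h'))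
  obtain ⟨δ, hδ0, hδsub⟩ := (isCompact_closedBall y₀ R).exists_cthickening_subset_open
    hΩopen hclosed_sub
  refine ⟨δ, hδ0, Sext, ?_, ?_, hΩ0⟩
  · refine hΩcont.mono ?_
    intro y' hy'
    apply hδsub
    rw [cthickening_closedBall hδ0.le hR.le, add_comm δ R]
    exact ball_subset_closedBall hy'
  · intro y' hy'
    refine hΩF y' ?_
    apply hδsub
    rw [cthickening_closedBall hδ0.le hR.le, add_comm δ R]
    exact ball_subset_closedBall hy'
end Aux5
section Aux6

set_option linter.unusedSectionVars false

variable {m : ℕ} {X : Type u} [TopologicalSpace X] [T2Space X]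
  {F : X → EuclideanSpace ℝ (Fin m)}

theorem global_section (htriv : ∀ y : EuclideanSpace ℝ (Fin m), ∃ V, y ∈ V ∧ Nonempty (MyTriv F V))
    (hFcont : Continuous F) (x₀ : X) :
    ∃ s : EuclideanSpace ℝ (Fin m) → X,
      Continuous s ∧ (∀ y, F (s y) = y) ∧ s (F x₀) = x₀ := by
  classical
  have seed : ∃ r > 0, HasSec F x₀ (ball (F x₀) r) := by
    obtain ⟨V, hyV, ⟨T⟩⟩ := htriv (F x₀)
    obtain ⟨i, hi⟩ := T.exists_mem hyV
    obtain ⟨r, hr0, hrsub⟩ := Metric.isOpen_iff.mp T.hV (F x₀) hyV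
    exact ⟨r, hr0, T.g i, (T.hgcont i).mono hrsub, fun y hy => T.hgF i y (hrsub hy),
      T.hWg i x₀ hi⟩
  obtain ⟨r₁, hr₁0, hsec₁⟩ := seed
  have hmono : ∀ {a b : ℝ}, a ≤ b → HasSec F x₀ (ball (F x₀) b) → HasSec F x₀ (ball (F x₀) a) :=
    fun hab h => h.mono (ball_subset_ball hab)
  have hall : ∀ R : ℝ, HasSec F x₀ (ball (F x₀) R) := by
    by_contra hno
    push_neg at hno
    obtain ⟨R₀, hR₀⟩ := hno
    set S := {R : ℝ | ¬ HasSec F x₀ (ball (F x₀) R)} with hS_def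
    have hSne : S.Nonempty := ⟨R₀, hR₀⟩
    have hSlb : ∀ R ∈ S, r₁ ≤ R := by
      intro R hR
      by_contra hlt
      push_neg at hlt
      exact hR (hmono hlt.le hsec₁)
    have hSbd : BddBelow S := ⟨r₁, hSlb⟩
    set Rs := sInf S with hRs_def
    have hRs_pos : 0 < Rs := lt_of_lt_of_le hr₁0 (le_csInf hSne hSlb)
    have hlt_sec : ∀ r < Rs, HasSec F x₀ (ball (F x₀) r) := by
      intro r hr
      by_contra hc
      exact absurd (csInf_le hSbd hc) (not_le.mpr hr)
    have hRs_sec : HasSec F x₀ (ball (F x₀) Rs) := by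
      refine hasSec_glue htriv (fun y => (dist y (F x₀) + Rs) / 2) (mem_ball_self hRs_pos)
        (fun y hy => by
          show dist y (F x₀) < (dist y (F x₀) + Rs) / 2
          rw [mem_ball] at hy; linarith)
        (fun y hy => ball_subset_ball (by
          show (dist y (F x₀) + Rs) / 2 ≤ Rs
          rw [mem_ball] at hy
          have := dist_nonneg (x := y) (y := F x₀)
          linarith))
        (fun y hy => hlt_sec _ (by
          show (dist y (F x₀) + Rs) / 2 < Rs
          rw [mem_ball] at hy; linarith))
    obtain ⟨ε, hε0, hsecε⟩ := extend_section hFcont htriv hRs_pos hRs_sec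
    have : Rs + ε ≤ Rs := by
      rw [hRs_def]
      refine le_csInf hSne (fun R hR => ?_)
      by_contra hlt
      push_neg at hlt
      exact hR (hmono hlt.le hsecε)
    linarith
  obtain ⟨s, h1, h2, h3⟩ := hasSec_glue htriv (fun y => dist y (F x₀) + 1) (mem_univ _)
    (fun y _ => by
      show dist y (F x₀) < dist y (F x₀) + 1
      linarith)
    (fun y _ => subset_univ _) (fun y _ => hall _)
  exact ⟨s, continuousOn_univ.mp h1, fun y => h2 y (mem_univ y), h3⟩

theorem F_surjective [Nonempty X] (hFcont : Continuous F)
    (hFproper : ∀ K : Set (EuclideanSpace ℝ (Fin m)), IsCompact K → IsCompact (F ⁻¹' K))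
    (hFloc : IsLocalHomeomorph F) : Surjective F := by
  have hopen : IsOpen (range F) := hFloc.isOpenMap.isOpen_range
  have hclosed : IsClosed (range F) := by
    refine isClosed_of_closure_subset fun y hy => ?_
    have hC : IsCompact (F '' (F ⁻¹' closedBall y 1)) :=
      (hFproper _ (isCompact_closedBall y 1)).image hFcont
    have hyC : y ∈ closure (F '' (F ⁻¹' closedBall y 1)) := by
      rw [_root_.mem_closure_iff] at hy ⊢
      intro o ho hyo
      obtain ⟨z, hz1, hz2⟩ := hy (o ∩ ball y 1) (ho.inter isOpen_ball)
        ⟨hyo, mem_ball_self one_pos⟩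
      obtain ⟨x, rfl⟩ := hz2
      exact ⟨F x, hz1.1, ⟨x, ball_subset_closedBall hz1.2, rfl⟩⟩
    rw [hC.isClosed.closure_eq] at hyC
    obtain ⟨x, -, rfl⟩ := hyC
    exact ⟨x, rfl⟩
  exact Set.range_eq_univ.mp (IsClopen.eq_univ ⟨hclosed, hopen⟩ (range_nonempty F))

end Aux6
section Aux7

set_option linter.unusedSectionVars false

variable {m : ℕ} {X : Type u} [TopologicalSpace X] [T2Space X]
  {F : X → EuclideanSpace ℝ (Fin m)}

theorem mytriv_isEvenlyCovered (hFcont : Continuous F) (hFloc : IsLocalHomeomorph F)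
    (hFsurj : Surjective F) {V : Set (EuclideanSpace ℝ (Fin m))} (T : MyTriv F V)
    {y : EuclideanSpace ℝ (Fin m)} (hy : y ∈ V) :
    IsEvenlyCovered F y (F ⁻¹' {y}) := by
  classical
  haveI hdisc : DiscreteTopology ↥(F ⁻¹' {y}) := fiber_discrete hFloc y
  obtain ⟨x₀, hx₀⟩ := hFsurj y
  haveI hne : Nonempty ↥(F ⁻¹' {y}) := ⟨⟨x₀, by simp [hx₀]⟩⟩
  set bval : T.ι → ↥(F ⁻¹' {y}) := fun i => ⟨T.g i y, by
    simp only [mem_preimage, mem_singleton_iff]; exact T.hgF i y hy⟩ with hbval_def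
  set idx : X → ↥(F ⁻¹' {y}) := fun x =>
    if h : F x ∈ V then bval (T.exists_mem h).choose else Classical.arbitrary _ with hidx_def
  have hidx : ∀ (x : X) (i), x ∈ T.W i → idx x = bval i := by
    intro x i hxi
    have hxV : F x ∈ V := T.W_subset i hxi
    have hspec := (T.exists_mem hxV).choose_spec
    have heq : (T.exists_mem hxV).choose = i := T.index_unique hspec hxi
    simp only [hidx_def, dif_pos hxV, heq]
  have hJex : ∀ p : ↥(F ⁻¹' {y}), ∃ i, p.1 ∈ T.W i := by
    intro p
    refine T.exists_mem ?_
    have h2 : F p.1 = y := p.2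
    rw [h2]; exact hy
  set J : ↥(F ⁻¹' {y}) → T.ι := fun p => (hJex p).choose with hJ_def
  have hJ : ∀ p, p.1 ∈ T.W (J p) := fun p => (hJex p).choose_spec
  have hgyJ : ∀ p : ↥(F ⁻¹' {y}), T.g (J p) y = p.1 := by
    intro p
    have h1 := T.hWg (J p) p.1 (hJ p)
    have h2 : F p.1 = y := p.2
    rwa [h2] at h1
  have hJb : ∀ i, J (bval i) = i := fun i =>
    T.index_unique (hJ (bval i)) (T.hgW i y hy)
  exact IsEvenlyCovered.of_trivialization (t := {
    toFun := fun x => (F x, idx x)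
    invFun := fun q => T.g (J q.2) q.1
    source := F ⁻¹' V
    target := V ×ˢ (univ : Set ↥(F ⁻¹' {y}))
    map_source' := fun x hx => ⟨hx, mem_univ _⟩
    map_target' := fun q hq => by
      show F (T.g (J q.2) q.1) ∈ V
      rw [T.hgF _ q.1 hq.1]; exact hq.1
    left_inv' := fun x hx => by
      obtain ⟨i, hi⟩ := T.exists_mem hx
      show T.g (J (idx x)) (F x) = x
      rw [hidx x i hi, hJb i]
      exact T.hWg i x hi
    right_inv' := by
      rintro ⟨y', p⟩ hq
      have hy'V : y' ∈ V := hq.1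
      show (F (T.g (J p) y'), idx (T.g (J p) y')) = (y', p)
      have h1 : F (T.g (J p) y') = y' := T.hgF _ _ hy'V
      have h2 : T.g (J p) y' ∈ T.W (J p) := T.hgW _ _ hy'V
      rw [hidx _ _ h2, h1]
      have h3 : bval (J p) = p := Subtype.ext (hgyJ p)
      rw [h3]
    open_source := T.hV.preimage hFcont
    open_target := T.hV.prod isOpen_univ
    continuousOn_toFun := by
      intro x hx
      obtain ⟨i, hi⟩ := T.exists_mem hx
      have hev : (fun x' => (F x', idx x')) =ᶠ[nhds x] fun x' => (F x', bval i) := by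
        filter_upwards [(T.hW i).mem_nhds hi] with x' hx'
        rw [hidx x' i hx']
      have hca : ContinuousAt (fun x' => (F x', bval i)) x :=
        hFcont.continuousAt.prodMk continuousAt_const
      exact ((continuousAt_congr hev).mpr hca).continuousWithinAt
    continuousOn_invFun := by
      rintro ⟨y₁, p₁⟩ hq
      have hO : IsOpen (V ×ˢ ({p₁} : Set ↥(F ⁻¹' {y}))) := T.hV.prod (isOpen_discrete _)
      have hqO : (y₁, p₁) ∈ V ×ˢ ({p₁} : Set ↥(F ⁻¹' {y})) := ⟨hq.1, rfl⟩
      have h1 : ContinuousOn (fun q : EuclideanSpace ℝ (Fin m) × ↥(F ⁻¹' {y}) =>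
          T.g (J p₁) q.1) (V ×ˢ (univ : Set ↥(F ⁻¹' {y}))) :=
        (T.hgcont (J p₁)).comp continuous_fst.continuousOn (fun q hq' => hq'.1)
      have h2 : ContinuousWithinAt (fun q : EuclideanSpace ℝ (Fin m) × ↥(F ⁻¹' {y}) =>
          T.g (J p₁) q.1) ((V ×ˢ (univ : Set ↥(F ⁻¹' {y}))) ∩ V ×ˢ ({p₁} : Set ↥(F ⁻¹' {y})))
          (y₁, p₁) :=
        (h1.mono inter_subset_left) _ ⟨hq, hqO⟩
      have h3 : ContinuousWithinAt (fun q : EuclideanSpace ℝ (Fin m) × ↥(F ⁻¹' {y}) =>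
          T.g (J q.2) q.1) ((V ×ˢ (univ : Set ↥(F ⁻¹' {y}))) ∩ V ×ˢ ({p₁} : Set ↥(F ⁻¹' {y})))
          (y₁, p₁) := by
        refine h2.congr (fun q hq' => ?_) rfl
        have : q.2 = p₁ := hq'.2.2
        rw [this]
      exact (continuousWithinAt_inter (hO.mem_nhds hqO)).mp h3
    baseSet := V
    open_baseSet := T.hV
    source_eq := rfl
    target_eq := rfl
    proj_toFun := fun p hp => rfl }) hy

end Aux7
/-- A continuous proper local homeomorphism `F` from a nonempty Hausdorff
space `X` to `ℝᵐ` is a surjective covering map; if moreover `X` is connected, `F` is a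
homeomorphism of `X` onto `ℝᵐ`. -/
theorem proper_local_homeo_to_euclidean_is_covering_and_homeo
    (m : ℕ) (X : Type*) [TopologicalSpace X] [Nonempty X] [T2Space X]
    (F : X → EuclideanSpace ℝ (Fin m))
    (hFcont : Continuous F)
    (hFproper : ∀ K : Set (EuclideanSpace ℝ (Fin m)), IsCompact K → IsCompact (F ⁻¹' K))
    (hFloc : IsLocalHomeomorph F) :
    IsCoveringMap F ∧ Surjective F ∧
      (ConnectedSpace X → ∃ e : X ≃ₜ EuclideanSpace ℝ (Fin m), ⇑e = F) := by
  classical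
  have htriv : ∀ y : EuclideanSpace ℝ (Fin m), ∃ V, y ∈ V ∧ Nonempty (MyTriv F V) :=
    exists_mytriv hFcont hFproper hFloc
  have hsurj : Surjective F := F_surjective hFcont hFproper hFloc
  refine ⟨?_, hsurj, ?_⟩
  · intro y
    obtain ⟨V, hyV, ⟨T⟩⟩ := htriv y
    exact mytriv_isEvenlyCovered hFcont hFloc hsurj T hyV
  · intro hconn
    haveI := hconn
    obtain ⟨s, hscont, hsF, hs0⟩ := global_section htriv hFcont (Classical.arbitrary X)
    have hinj : Injective F := by
      have heq : Set.EqOn (s ∘ F) id (Set.univ : Set X) := by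
        refine lift_unique htriv isPreconnected_univ
          ((hscont.comp hFcont).continuousOn) continuousOn_id
          (fun a _ => by simp only [Function.comp_apply, id_eq, hsF (F a)])
          (Set.mem_univ (Classical.arbitrary X)) ?_
        simp only [Function.comp_apply, id_eq, hs0]
      intro a b hab
      have ha := heq (Set.mem_univ a)
      have hb := heq (Set.mem_univ b)
      simp only [Function.comp_apply, id_eq] at ha hb
      rw [← ha, ← hb, hab]
    exact ⟨hFloc.toHomeomorphOfBijective ⟨hinj, hsurj⟩, rfl⟩
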